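/- Let V be a strict weak order on a finite candidate set C with three distinct mutually indifferent maximal candidates a, b, c, and let A be any axis on C. Then there exists a linear extension of V that contains a v-valley with respect to A; hence V is not necessarily single-peaked with respect to any axis. -/

import Mathlib

def VValley {C : Type*} (A V : C → C → Prop) : Prop :=
  ∃ c1 c2 c3 : C, A c1 c2 ∧ A c2 c3 ∧ V c1 c2 ∧ V c3 c2

def UValley {C : Type*} (A V : C → C → Prop) : Prop :=
  ∃ a b c d : C, a ≠ b ∧ a ≠ c ∧ a ≠ d ∧ b ≠ c ∧ b ≠ d ∧ c ≠ d ∧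
    A a b ∧ A b d ∧ A a c ∧ A c d ∧ V a b ∧ V d c

def Extends {C : Type*} (V T : C → C → Prop) : Prop :=
  ∀ x y, V x y → T x y

/-- `V` is a strict partial order: asymmetric and transitive. -/
def IsSPO {C : Type*} (V : C → C → Prop) : Prop :=
  (∀ x y, V x y → ¬ V y x) ∧ (∀ x y z, V x y → V y z → V x z)

/-- `V` is a strict weak order: a strict partial order with transitive incomparability. -/
def IsSWO {C : Type*} (V : C → C → Prop) : Prop :=
  IsSPO V ∧ ∀ x y z, (¬ V x y ∧ ¬ V y x) → (¬ V y z ∧ ¬ V z y) → (¬ V x z ∧ ¬ V z x)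

/-- `V` possibly single-peaked w.r.t. axis `A`: it extends to a total order with no v-valley. -/
def PossSP {C : Type*} (A V : C → C → Prop) : Prop :=
  ∃ T : C → C → Prop, IsStrictTotalOrder C T ∧ Extends V T ∧ ¬ VValley A T

open Classical in
lemma key {C : Type*} [Fintype C] (V : C → C → Prop) (hV : IsSWO V)
    (x y z : C) (hxy : x ≠ y) (hzy : z ≠ y)
    (ixy : ¬ V x y ∧ ¬ V y x) (izy : ¬ V z y ∧ ¬ V y z) :
    ∃ T : C → C → Prop, IsStrictTotalOrder C T ∧ Extends V T ∧ T x y ∧ T z y := by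
  classical
  obtain ⟨asym, tr⟩ := hV.1
  have sw := hV.2
  set e := (Fintype.equivFin C) with he
  set f : C → ℕ := fun w => if w = y then 0 else (e w : ℕ) + 1 with hf
  have hfinj : Function.Injective f := by
    intro u v h
    by_cases hu : u = y <;> by_cases hv : v = y <;> simp [hf, hu, hv] at h <;>
      first | (subst hu; subst hv; rfl) | (exact absurd h (by omega)) |
        (exact e.injective (Fin.ext h))
  refine ⟨fun u v => V u v ∨ (¬ V u v ∧ ¬ V v u ∧ f v < f u), ?_, ?_, ?_, ?_⟩
  · refine { trichotomous := ?_, irrefl := ?_, trans := ?_ }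
    · intro u v
      suffices H : (V u v ∨ (¬ V u v ∧ ¬ V v u ∧ f v < f u)) ∨ u = v ∨
          (V v u ∨ (¬ V v u ∧ ¬ V u v ∧ f u < f v)) from fun n1 n2 =>
        H.elim (fun h => absurd h n1) (fun h => h.elim id (fun h => absurd h n2))
      by_cases huv : u = v
      · exact Or.inr (Or.inl huv)
      by_cases h1 : V u v
      · exact Or.inl (Or.inl h1)
      by_cases h2 : V v u
      · exact Or.inr (Or.inr (Or.inl h2))
      rcases lt_or_gt_of_ne (fun h => huv (hfinj h)) with h | h
      · exact Or.inr (Or.inr (Or.inr ⟨h2, h1, h⟩))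
      · exact Or.inl (Or.inr ⟨h1, h2, h⟩)
    · intro u h
      rcases h with h | ⟨_, _, h⟩
      · exact asym _ _ h h
      · exact lt_irrefl _ h
    · intro u v w h1 h2
      rcases h1 with h1 | ⟨h1a, h1b, h1c⟩ <;> rcases h2 with h2 | ⟨h2a, h2b, h2c⟩
      · exact Or.inl (tr _ _ _ h1 h2)
      · left
        by_contra huw
        by_cases hwu : V w u
        · exact h2b (tr _ _ _ hwu h1)
        · exact (sw u w v ⟨huw, hwu⟩ ⟨h2b, h2a⟩).1 h1
      · left
        by_contra huw
        by_cases hwu : V w u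
        · exact h1b (tr _ _ _ h2 hwu)
        · exact (sw v u w ⟨h1b, h1a⟩ ⟨huw, hwu⟩).1 h2
      · exact Or.inr ⟨(sw u v w ⟨h1a, h1b⟩ ⟨h2a, h2b⟩).1,
          (sw u v w ⟨h1a, h1b⟩ ⟨h2a, h2b⟩).2, lt_trans h2c h1c⟩
  · exact fun u v h => Or.inl h
  · exact Or.inr ⟨ixy.1, ixy.2, by simp [hf, hxy]⟩
  · exact Or.inr ⟨izy.1, izy.2, by simp [hf, hzy]⟩

theorem stmt16 {C : Type*} [Fintype C] (V : C → C → Prop) (hV : IsSWO V)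
    (a b c : C) (hab : a ≠ b) (hac : a ≠ c) (hbc : b ≠ c)
    (hmaxa : ∀ x, ¬ V x a) (hmaxb : ∀ x, ¬ V x b) (hmaxc : ∀ x, ¬ V x c) :
    ∀ A : C → C → Prop, IsStrictTotalOrder C A →
      ∃ T : C → C → Prop, IsStrictTotalOrder C T ∧ Extends V T ∧ VValley A T := by
  intro A hA
  have iab : ¬V a b ∧ ¬V b a := ⟨hmaxb a, hmaxa b⟩
  have iac : ¬V a c ∧ ¬V c a := ⟨hmaxc a, hmaxa c⟩
  have ibc : ¬V b c ∧ ¬V c b := ⟨hmaxc b, hmaxb c⟩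
  have main : ∀ p m q : C, p ≠ m → q ≠ m → (¬V p m ∧ ¬V m p) → (¬V q m ∧ ¬V m q) →
      A p m → A m q → ∃ T, IsStrictTotalOrder C T ∧ Extends V T ∧ VValley A T := by
    intro p m q hpm hqm ipm iqm h1 h2
    obtain ⟨T, hT, hE, h3, h4⟩ := key V hV p m q hpm hqm ipm iqm
    exact ⟨T, hT, hE, p, m, q, h1, h2, h3, h4⟩
  rcases (haveI := hA; trichotomous_of A a b) with h1 | h1 | h1
  · rcases (haveI := hA; trichotomous_of A b c) with h2 | h2 | h2
    · exact main a b c hab (Ne.symm hbc) iab ⟨ibc.2, ibc.1⟩ h1 h2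
    · exact absurd h2 hbc
    · rcases (haveI := hA; trichotomous_of A a c) with h3 | h3 | h3
      · exact main a c b hac hbc iac ibc h3 h2
      · exact absurd h3 hac
      · exact main c a b (Ne.symm hac) (Ne.symm hab) ⟨iac.2, iac.1⟩ ⟨iab.2, iab.1⟩ h3 h1
  · exact absurd h1 hab
  · rcases (haveI := hA; trichotomous_of A a c) with h2 | h2 | h2
    · exact main b a c (Ne.symm hab) (Ne.symm hac) ⟨iab.2, iab.1⟩ ⟨iac.2, iac.1⟩ h1 h2
    · exact absurd h2 hac
    · rcases (haveI := hA; trichotomous_of A b c) with h3 | h3 | h3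
      · exact main b c a hbc hac ibc iac h3 h2
      · exact absurd h3 hbc
      · exact main c b a (Ne.symm hbc) hab ⟨ibc.2, ibc.1⟩ iab h3 h1
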